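/- Existence and uniqueness for linear weakly singular Volterra equations: Let α ∈ (0,1), let ȳ : (0,1] → ℝ be continuous with ϑ ↦ ϑ^(1−α) ȳ(ϑ) bounded, and let c, d : [0,1] → ℝ be continuous. Then there exists a unique continuous function y : (0,1] → ℝ with ϑ ↦ ϑ^(1−α) y(ϑ) bounded such that y(ϑ) = ȳ(ϑ) + (1/Γ(α)) ∫₀^ϑ [c(ζ) y(ζ) + d(ζ)] (ϑ−ζ)^(α−1) dζ for every ϑ ∈ (0,1]. -/

import Mathlib

open MeasureTheory Real Set Filter

open Topology intervalIntegral BoundedContinuousFunction Interval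

namespace V9

/-- Beta-type integrability on [0,1]. -/
lemma beta_integrable {a b : ℝ} (ha : -1 < a) (hb : -1 < b) :
    IntervalIntegrable (fun s : ℝ => s ^ a * (1 - s) ^ b) volume 0 1 := by
  have h1 : IntervalIntegrable (fun s : ℝ => s ^ a * (1 - s) ^ b) volume 0 (1/2) := by
    apply IntervalIntegrable.mul_continuousOn (intervalIntegrable_rpow' ha)
    apply ContinuousOn.rpow_const
    · exact (continuous_const.sub continuous_id).continuousOn
    · intro x hx
      rw [uIcc_of_le (by norm_num)] at hx
      left; nlinarith [hx.1, hx.2]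
  have h2 : IntervalIntegrable (fun s : ℝ => s ^ a * (1 - s) ^ b) volume (1/2) 1 := by
    have base : IntervalIntegrable (fun s : ℝ => (1 - s) ^ b) volume (1/2) 1 := by
      have := (intervalIntegrable_rpow' (a := 0) (b := 1/2) hb).comp_sub_left 1
      norm_num at this
      exact this.symm
    apply base.continuousOn_mul (g := fun s : ℝ => s ^ a)
    apply ContinuousOn.rpow_const continuousOn_id
    intro x hx
    rw [uIcc_of_le (by norm_num)] at hx
    simp only [id_eq]
    left; nlinarith [hx.1]
  exact h1.trans h2


/-- substitution ζ = ϑ s -/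
lemma subst_integral (f : ℝ → ℝ) (ϑ : ℝ) :
    (∫ ζ in (0:ℝ)..ϑ, f ζ) = ϑ * ∫ s in (0:ℝ)..1, f (ϑ * s) := by
  have := intervalIntegral.smul_integral_comp_mul_left (a := (0:ℝ)) (b := 1) f ϑ
  simp only [smul_eq_mul, mul_zero, mul_one] at this
  rw [this]

lemma ae_mem_Ioo_of_uIoc : ∀ᵐ s : ℝ ∂volume, s ∈ Ι (0:ℝ) 1 → s ∈ Ioo (0:ℝ) 1 := by
  have h1 : ∀ᵐ s : ℝ ∂volume, s ≠ 1 := by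
    rw [ae_iff]
    have : {s : ℝ | ¬ s ≠ 1} = {1} := by ext s; simp
    rw [this]
    exact measure_singleton 1
  filter_upwards [h1] with s hs hmem
  rw [uIoc_of_le (by norm_num : (0:ℝ) ≤ 1)] at hmem
  exact ⟨hmem.1, lt_of_le_of_ne hmem.2 hs⟩

/-- The fundamental bound: if |h ζ| ≤ M ζ^a on (0,1] then
    |∫₀^ϑ h(ζ)(ϑ-ζ)^b dζ| ≤ M ϑ^(a+b+1) ∫₀^1 s^a (1-s)^b ds. -/
lemma bound_integral {a b : ℝ} (ha : -1 < a) (hb : -1 < b)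
    {h : ℝ → ℝ} {M : ℝ} (hM0 : 0 ≤ M)
    (hM : ∀ ζ ∈ Ioc (0:ℝ) 1, |h ζ| ≤ M * ζ ^ a)
    {ϑ : ℝ} (hϑ : ϑ ∈ Ioc (0:ℝ) 1) :
    |∫ ζ in (0:ℝ)..ϑ, h ζ * (ϑ - ζ) ^ b| ≤
      M * ϑ ^ (a + b + 1) * ∫ s in (0:ℝ)..1, s ^ a * (1 - s) ^ b := by
  obtain ⟨hϑ0, hϑ1⟩ := hϑ
  rw [subst_integral]
  rw [abs_mul, abs_of_pos hϑ0]
  have key : |∫ s in (0:ℝ)..1, h (ϑ * s) * (ϑ - ϑ * s) ^ b| ≤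
      M * ϑ ^ (a + b) * ∫ s in (0:ℝ)..1, s ^ a * (1 - s) ^ b := by
    have hbd : ∀ᵐ s ∂volume.restrict (Ι (0:ℝ) 1),
        ‖h (ϑ * s) * (ϑ - ϑ * s) ^ b‖ ≤ M * ϑ ^ (a + b) * (s ^ a * (1 - s) ^ b) := by
      refine (ae_restrict_iff' measurableSet_uIoc).2 ?_
      filter_upwards [ae_mem_Ioo_of_uIoc] with s hs hmem
      obtain ⟨hs0, hs1⟩ := hs hmem
      have hϑs : ϑ * s ∈ Ioc (0:ℝ) 1 :=
        ⟨mul_pos hϑ0 hs0, le_trans (by nlinarith) hϑ1⟩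
      have h1 : |h (ϑ * s)| ≤ M * (ϑ * s) ^ a := hM _ hϑs
      have h2 : (ϑ - ϑ * s) ^ b = ϑ ^ b * (1 - s) ^ b := by
        rw [show ϑ - ϑ * s = ϑ * (1 - s) by ring, Real.mul_rpow hϑ0.le (by linarith)]
      rw [Real.norm_eq_abs, abs_mul, h2]
      have h3 : |ϑ ^ b * (1 - s) ^ b| = ϑ ^ b * (1 - s) ^ b := by
        rw [abs_of_nonneg]
        exact mul_nonneg (Real.rpow_nonneg hϑ0.le _) (Real.rpow_nonneg (by linarith) _)
      rw [h3, Real.mul_rpow hϑ0.le hs0.le] at *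
      calc |h (ϑ * s)| * (ϑ ^ b * (1 - s) ^ b)
          ≤ M * (ϑ ^ a * s ^ a) * (ϑ ^ b * (1 - s) ^ b) := by
            apply mul_le_mul_of_nonneg_right h1
            exact mul_nonneg (Real.rpow_nonneg hϑ0.le _) (Real.rpow_nonneg (by linarith) _)
        _ = M * (ϑ ^ a * ϑ ^ b) * (s ^ a * (1 - s) ^ b) := by ring
        _ = M * ϑ ^ (a + b) * (s ^ a * (1 - s) ^ b) := by
            rw [← Real.rpow_add hϑ0]
    have hint : IntervalIntegrable
        (fun s => M * ϑ ^ (a + b) * (s ^ a * (1 - s) ^ b)) volume 0 1 :=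
      (beta_integrable ha hb).const_mul _
    have := intervalIntegral.norm_integral_le_abs_of_norm_le hbd hint
    rw [Real.norm_eq_abs] at this
    refine this.trans ?_
    rw [intervalIntegral.integral_const_mul, abs_mul]
    rw [abs_of_nonneg (mul_nonneg hM0 (Real.rpow_nonneg hϑ0.le _)),
      abs_of_nonneg]
    · apply intervalIntegral.integral_nonneg (by norm_num)
      intro s hs
      exact mul_nonneg (Real.rpow_nonneg hs.1 _) (Real.rpow_nonneg (by linarith [hs.2]) _)
  calc ϑ * |∫ s in (0:ℝ)..1, h (ϑ * s) * (ϑ - ϑ * s) ^ b|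
      ≤ ϑ * (M * ϑ ^ (a + b) * ∫ s in (0:ℝ)..1, s ^ a * (1 - s) ^ b) :=
        mul_le_mul_of_nonneg_left key hϑ0.le
    _ = M * ϑ ^ (a + b + 1) * ∫ s in (0:ℝ)..1, s ^ a * (1 - s) ^ b := by
        rw [Real.rpow_add hϑ0 _ 1, Real.rpow_one]; ring


/-- integrability of the substituted integrand on [0,1] -/
lemma integrable_subst {a b : ℝ} (ha : -1 < a) (hb : -1 < b)
    {h : ℝ → ℝ} (hcont : ContinuousOn h (Ioc 0 1)) {M : ℝ}
    (hM : ∀ ζ ∈ Ioc (0:ℝ) 1, |h ζ| ≤ M * ζ ^ a)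
    {ϑ : ℝ} (hϑ : ϑ ∈ Ioc (0:ℝ) 1) :
    IntervalIntegrable (fun s => h (ϑ * s) * (ϑ - ϑ * s) ^ b) volume 0 1 := by
  obtain ⟨hϑ0, hϑ1⟩ := hϑ
  have hM0 : 0 ≤ M := by
    have := hM 1 (by norm_num)
    have h10 : (1:ℝ) ^ a = 1 := Real.one_rpow a
    rw [h10, mul_one] at this
    exact le_trans (abs_nonneg _) this
  rw [intervalIntegrable_iff, uIoc_of_le (by norm_num : (0:ℝ) ≤ 1)]
  have hrestr : volume.restrict (Ioc (0:ℝ) 1) = volume.restrict (Ioo (0:ℝ) 1) :=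
    (Measure.restrict_congr_set Ioo_ae_eq_Ioc).symm
  rw [IntegrableOn, hrestr]
  -- continuity on Ioo 0 1
  have hc : ContinuousOn (fun s => h (ϑ * s) * (ϑ - ϑ * s) ^ b) (Ioo 0 1) := by
    apply ContinuousOn.mul
    · apply hcont.comp (continuous_const.mul continuous_id).continuousOn
      intro s hs
      refine ⟨mul_pos hϑ0 hs.1, le_trans ?_ hϑ1⟩
      show ϑ * s ≤ ϑ
      nlinarith [hs.1.le, hs.2.le]
    · apply ContinuousOn.rpow_const
      · exact (continuous_const.sub (continuous_const.mul continuous_id)).continuousOn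
      · intro s hs
        left
        have hlt : ϑ * s < ϑ := by nlinarith [hs.1, hs.2]
        show ϑ - ϑ * s ≠ 0
        exact ne_of_gt (sub_pos.mpr hlt)
  apply Integrable.mono (g := fun s => M * ϑ ^ (a + b) * (s ^ a * (1 - s) ^ b))
  · have := (beta_integrable ha hb).const_mul (M * ϑ ^ (a + b))
    rw [intervalIntegrable_iff, uIoc_of_le (by norm_num : (0:ℝ) ≤ 1), IntegrableOn, hrestr] at this
    exact this
  · exact (hc.aestronglyMeasurable measurableSet_Ioo)
  · refine (ae_restrict_iff' measurableSet_Ioo).2 (ae_of_all _ ?_)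
    intro s hs
    obtain ⟨hs0, hs1⟩ := hs
    have hϑs : ϑ * s ∈ Ioc (0:ℝ) 1 := ⟨mul_pos hϑ0 hs0, le_trans (by nlinarith) hϑ1⟩
    have h1 : |h (ϑ * s)| ≤ M * (ϑ * s) ^ a := hM _ hϑs
    have h2 : (ϑ - ϑ * s) ^ b = ϑ ^ b * (1 - s) ^ b := by
      rw [show ϑ - ϑ * s = ϑ * (1 - s) by ring, Real.mul_rpow hϑ0.le (by linarith)]
    rw [Real.norm_eq_abs, Real.norm_eq_abs, abs_mul, h2]
    have h3 : |ϑ ^ b * (1 - s) ^ b| = ϑ ^ b * (1 - s) ^ b := by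
      rw [abs_of_nonneg]
      exact mul_nonneg (Real.rpow_nonneg hϑ0.le _) (Real.rpow_nonneg (by linarith) _)
    rw [h3, Real.mul_rpow hϑ0.le hs0.le] at *
    have goal : |h (ϑ * s)| * (ϑ ^ b * (1 - s) ^ b) ≤ M * ϑ ^ (a+b) * (s ^ a * (1 - s) ^ b) := by
      calc |h (ϑ * s)| * (ϑ ^ b * (1 - s) ^ b)
          ≤ M * (ϑ ^ a * s ^ a) * (ϑ ^ b * (1 - s) ^ b) := by
            apply mul_le_mul_of_nonneg_right h1
            exact mul_nonneg (Real.rpow_nonneg hϑ0.le _) (Real.rpow_nonneg (by linarith) _)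
        _ = M * (ϑ ^ a * ϑ ^ b) * (s ^ a * (1 - s) ^ b) := by ring
        _ = M * ϑ ^ (a + b) * (s ^ a * (1 - s) ^ b) := by rw [← Real.rpow_add hϑ0]
    refine goal.trans (le_abs_self _)

/-- the original integrand is interval integrable -/
lemma integrable_kernel {a b : ℝ} (ha : -1 < a) (hb : -1 < b)
    {h : ℝ → ℝ} (hcont : ContinuousOn h (Ioc 0 1)) {M : ℝ}
    (hM : ∀ ζ ∈ Ioc (0:ℝ) 1, |h ζ| ≤ M * ζ ^ a)
    {ϑ : ℝ} (hϑ : ϑ ∈ Ioc (0:ℝ) 1) :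
    IntervalIntegrable (fun ζ => h ζ * (ϑ - ζ) ^ b) volume 0 ϑ := by
  obtain ⟨hϑ0, hϑ1⟩ := hϑ
  have := (integrable_subst ha hb hcont hM ⟨hϑ0, hϑ1⟩).comp_mul_left (c := ϑ⁻¹)
  -- this : IntervalIntegrable (fun x => h (ϑ * (ϑ⁻¹ * x)) * (ϑ - ϑ * (ϑ⁻¹ * x)) ^ b) volume (0/ϑ⁻¹) (1/ϑ⁻¹)
  simp only [zero_div, one_div, inv_inv] at this
  refine this.congr ?_
  intro x _
  simp only
  rw [mul_inv_cancel_left₀ (ne_of_gt hϑ0)]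


lemma M_nonneg {a M : ℝ} {h : ℝ → ℝ} (hM : ∀ ζ ∈ Ioc (0:ℝ) 1, |h ζ| ≤ M * ζ ^ a) : 0 ≤ M := by
  have := hM 1 (by norm_num)
  rw [Real.one_rpow, mul_one] at this
  exact le_trans (abs_nonneg _) this

/-- ϑ^e ≤ (c)^e + 1 for ϑ ∈ [c, 1], c > 0, any e -/
lemma rpow_le_aux {c ϑ e : ℝ} (hc : 0 < c) (h1 : c ≤ ϑ) (h2 : ϑ ≤ 1) :
    ϑ ^ e ≤ c ^ e + 1 := by
  rcases le_or_gt e 0 with he | he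
  · have := Real.rpow_le_rpow_of_nonpos hc h1 he
    linarith
  · have h3 : ϑ ^ e ≤ 1 := Real.rpow_le_one (by linarith) h2 he.le
    have h4 : 0 ≤ c ^ e := Real.rpow_nonneg hc.le _
    linarith

lemma cont_subst {a b : ℝ} (ha : -1 < a) (hb : -1 < b)
    {h : ℝ → ℝ} (hcont : ContinuousOn h (Ioc 0 1)) {M : ℝ}
    (hM : ∀ ζ ∈ Ioc (0:ℝ) 1, |h ζ| ≤ M * ζ ^ a) :
    ContinuousOn (fun ϑ => ∫ s in (0:ℝ)..1, h (ϑ * s) * (ϑ - ϑ * s) ^ b) (Ioc 0 1) := by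
  have hM0 : 0 ≤ M := M_nonneg hM
  intro ϑ₀ hϑ₀
  obtain ⟨h0, h1⟩ := hϑ₀
  have hhalf : 0 < ϑ₀ / 2 := by linarith
  set Ca : ℝ := (ϑ₀/2) ^ a + 1 with hCa
  set Cb : ℝ := (ϑ₀/2) ^ b + 1 with hCb
  have hCa0 : 0 ≤ Ca := by positivity
  have hCb0 : 0 ≤ Cb := by positivity
  have hev : ∀ᶠ ϑ in nhdsWithin ϑ₀ (Ioc (0:ℝ) 1), ϑ₀/2 < ϑ ∧ ϑ ∈ Ioc (0:ℝ) 1 := by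
    refine Filter.Eventually.and ?_ eventually_mem_nhdsWithin
    exact Filter.Eventually.filter_mono nhdsWithin_le_nhds (eventually_gt_nhds (by linarith))
  apply intervalIntegral.continuousWithinAt_of_dominated_interval
    (bound := fun t => M * Ca * Cb * (t ^ a * (1 - t) ^ b))
  · filter_upwards [hev] with ϑ hϑ
    exact ((integrable_subst ha hb hcont hM hϑ.2).def').aestronglyMeasurable
  · filter_upwards [hev] with ϑ hϑ
    obtain ⟨hϑh, hϑ0, hϑ1⟩ := hϑ
    filter_upwards [ae_mem_Ioo_of_uIoc] with t ht hmem
    obtain ⟨ht0, ht1⟩ := ht hmem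
    have hϑpos : (0:ℝ) < ϑ := lt_trans hhalf hϑh
    have hϑt : ϑ * t ∈ Ioc (0:ℝ) 1 := ⟨mul_pos hϑpos ht0, by nlinarith⟩
    have e1 : |h (ϑ * t)| ≤ M * (ϑ * t) ^ a := hM _ hϑt
    have e2 : (ϑ - ϑ * t) ^ b = ϑ ^ b * (1 - t) ^ b := by
      rw [show ϑ - ϑ * t = ϑ * (1 - t) by ring, Real.mul_rpow hϑpos.le (by linarith)]
    rw [Real.norm_eq_abs, abs_mul, e2, Real.mul_rpow hϑpos.le ht0.le] at *
    have e3 : |ϑ ^ b * (1 - t) ^ b| = ϑ ^ b * (1 - t) ^ b :=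
      abs_of_nonneg (mul_nonneg (Real.rpow_nonneg hϑpos.le _) (Real.rpow_nonneg (by linarith) _))
    rw [e3]
    have ea : ϑ ^ a ≤ Ca := rpow_le_aux hhalf hϑh.le hϑ1
    have eb : ϑ ^ b ≤ Cb := rpow_le_aux hhalf hϑh.le hϑ1
    have pos_ta : (0:ℝ) ≤ t ^ a := Real.rpow_nonneg ht0.le _
    have pos_tb : (0:ℝ) ≤ (1 - t) ^ b := Real.rpow_nonneg (by linarith) _
    have pos_ϑa : (0:ℝ) ≤ ϑ ^ a := Real.rpow_nonneg hϑpos.le _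
    have pos_ϑb : (0:ℝ) ≤ ϑ ^ b := Real.rpow_nonneg hϑpos.le _
    calc |h (ϑ * t)| * (ϑ ^ b * (1 - t) ^ b)
        ≤ M * (ϑ ^ a * t ^ a) * (ϑ ^ b * (1 - t) ^ b) := by
          apply mul_le_mul_of_nonneg_right e1 (mul_nonneg pos_ϑb pos_tb)
      _ = (ϑ ^ a) * (ϑ ^ b) * (M * (t ^ a * (1 - t) ^ b)) := by ring
      _ ≤ Ca * Cb * (M * (t ^ a * (1 - t) ^ b)) := by
          apply mul_le_mul_of_nonneg_right _ (by positivity)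
          exact mul_le_mul ea eb pos_ϑb hCa0
      _ = M * Ca * Cb * (t ^ a * (1 - t) ^ b) := by ring
  · exact (beta_integrable ha hb).const_mul _
  · filter_upwards [ae_mem_Ioo_of_uIoc] with t ht hmem
    obtain ⟨ht0, ht1⟩ := ht hmem
    apply ContinuousWithinAt.mul
    · have hmaps : MapsTo (fun ϑ => ϑ * t) (Ioc (0:ℝ) 1) (Ioc (0:ℝ) 1) := by
        intro ϑ hϑ
        refine ⟨mul_pos hϑ.1 ht0, ?_⟩
        show ϑ * t ≤ 1
        nlinarith [hϑ.1, hϑ.2]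
      exact ContinuousWithinAt.comp
        (hcont _ ⟨mul_pos h0 ht0, by nlinarith⟩)
        ((continuous_id.mul continuous_const).continuousWithinAt) hmaps
    · apply ContinuousAt.continuousWithinAt
      apply ContinuousAt.rpow_const
      · exact (continuous_id.sub (continuous_id.mul continuous_const)).continuousAt
      · left
        show ϑ₀ - ϑ₀ * t ≠ 0
        have : ϑ₀ * t < ϑ₀ := by nlinarith
        exact ne_of_gt (by linarith)


lemma asm_aux {f : ℝ → ℝ} (hf : ContinuousOn f (Ioo 0 1)) :
    AEStronglyMeasurable f (volume.restrict (Ι (0:ℝ) 1)) := by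
  rw [uIoc_of_le (by norm_num : (0:ℝ) ≤ 1), ← Measure.restrict_congr_set Ioo_ae_eq_Ioc]
  exact hf.aestronglyMeasurable measurableSet_Ioo

lemma Bint_tendsto {α b : ℝ} (hα : 0 < α) (hb : -1 < b) :
    Tendsto (fun n : ℕ => ∫ s in (0:ℝ)..1, s ^ (((n:ℝ)+1)*α - 1) * (1-s)^b)
      atTop (𝓝 0) := by
  have etendsto : Tendsto (fun n : ℕ => ((n:ℝ)+1)*α - 1) atTop atTop := by
    have e1 : Tendsto (fun n : ℕ => (n:ℝ)) atTop atTop := tendsto_natCast_atTop_atTop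
    have e2 : Tendsto (fun n : ℕ => ((n:ℝ)+1)) atTop atTop :=
      tendsto_atTop_add_const_right _ 1 e1
    have e3 := e2.atTop_mul_const hα
    have e4 := tendsto_atTop_add_const_right atTop (-1) e3
    simpa [sub_eq_add_neg] using e4
  have key := intervalIntegral.tendsto_integral_filter_of_dominated_convergence
    (μ := volume) (a := 0) (b := 1) (l := atTop)
    (F := fun (n : ℕ) s => s ^ (((n:ℝ)+1)*α - 1) * (1-s)^b)
    (f := fun _ => (0:ℝ))
    (bound := fun s => s ^ (α - 1) * (1-s)^b)
    ?_ ?_ ?_ ?_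
  · simpa using key
  · refine Filter.Eventually.of_forall fun n => asm_aux ?_
    apply ContinuousOn.mul
    · exact ContinuousOn.rpow_const continuousOn_id fun x hx => Or.inl (ne_of_gt hx.1)
    · exact ContinuousOn.rpow_const (continuous_const.sub continuous_id).continuousOn
        fun x hx => Or.inl (show 1 - x ≠ 0 from ne_of_gt (by linarith [hx.2]))
  · refine Filter.Eventually.of_forall fun n => ?_
    filter_upwards [ae_mem_Ioo_of_uIoc] with s hs hmem
    obtain ⟨hs0, hs1⟩ := hs hmem
    rw [Real.norm_eq_abs, abs_mul, abs_of_nonneg (Real.rpow_nonneg hs0.le _),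
      abs_of_nonneg (Real.rpow_nonneg (by linarith) _)]
    apply mul_le_mul_of_nonneg_right _ (Real.rpow_nonneg (by linarith) _)
    apply Real.rpow_le_rpow_of_exponent_ge hs0 hs1.le
    nlinarith [Nat.cast_nonneg (α := ℝ) n]
  · exact beta_integrable (by linarith) hb
  · filter_upwards [ae_mem_Ioo_of_uIoc] with s hs hmem
    obtain ⟨hs0, hs1⟩ := hs hmem
    have h1 : Tendsto (fun n : ℕ => s ^ (((n:ℝ)+1)*α - 1)) atTop (𝓝 0) :=
      (tendsto_rpow_atTop_of_base_lt_one s (by linarith) hs1).comp etendsto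
    simpa using h1.mul_const ((1-s)^b)


/-- the unweighted function associated to a weighted bounded continuous function -/
noncomputable def ext (α : ℝ) (g : ↥(Ioc (0:ℝ) 1) →ᵇ ℝ) : ℝ → ℝ :=
  fun ζ => if hζ : ζ ∈ Ioc (0:ℝ) 1 then ζ ^ (α-1) * g ⟨ζ, hζ⟩ else 0

lemma ext_eq (α : ℝ) (g : ↥(Ioc (0:ℝ) 1) →ᵇ ℝ) {ζ : ℝ} (hζ : ζ ∈ Ioc (0:ℝ) 1) :
    ext α g ζ = ζ ^ (α-1) * g ⟨ζ, hζ⟩ := dif_pos hζ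

lemma ext_cont (α : ℝ) (g : ↥(Ioc (0:ℝ) 1) →ᵇ ℝ) : ContinuousOn (ext α g) (Ioc 0 1) := by
  rw [continuousOn_iff_continuous_restrict]
  have : (Ioc (0:ℝ) 1).domRestrict (ext α g) = fun z : Ioc (0:ℝ) 1 => (z:ℝ) ^ (α-1) * g z := by
    funext z
    simp only [domRestrict_apply, ext, dif_pos z.2]
  rw [this]
  apply Continuous.mul _ g.continuous
  rw [continuous_iff_continuousAt]
  intro z
  exact (continuous_subtype_val.continuousAt).rpow_const (Or.inl (ne_of_gt z.2.1))

lemma ext_bdd (α : ℝ) (g : ↥(Ioc (0:ℝ) 1) →ᵇ ℝ) {ζ : ℝ} (hζ : ζ ∈ Ioc (0:ℝ) 1) :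
    |ext α g ζ| ≤ ‖g‖ * ζ ^ (α-1) := by
  rw [ext_eq α g hζ, abs_mul, abs_of_nonneg (Real.rpow_nonneg hζ.1.le _), mul_comm]
  exact mul_le_mul_of_nonneg_right (g.norm_coe_le_norm ⟨ζ, hζ⟩) (Real.rpow_nonneg hζ.1.le _)

lemma ext_sub (α : ℝ) (g₁ g₂ : ↥(Ioc (0:ℝ) 1) →ᵇ ℝ) {ζ : ℝ} (hζ : ζ ∈ Ioc (0:ℝ) 1) :
    ext α g₁ ζ - ext α g₂ ζ = ζ ^ (α-1) * (g₁ ⟨ζ, hζ⟩ - g₂ ⟨ζ, hζ⟩) := by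
  rw [ext_eq α g₁ hζ, ext_eq α g₂ hζ]; ring

/-- The Picard operator (before packaging as a bounded continuous function). -/
noncomputable def TT (α : ℝ) (ybar c d : ℝ → ℝ) (g : ↥(Ioc (0:ℝ) 1) →ᵇ ℝ) : ℝ → ℝ :=
  fun ϑ => ϑ ^ (1-α) * (ybar ϑ + (1 / Real.Gamma α) *
    ∫ ζ in (0:ℝ)..ϑ, (c ζ * ext α g ζ + d ζ) * (ϑ - ζ) ^ (α-1))


lemma subst_integral' (h : ℝ → ℝ) (b ϑ : ℝ) :
    (∫ ζ in (0:ℝ)..ϑ, h ζ * (ϑ - ζ) ^ b) = ϑ * ∫ s in (0:ℝ)..1, h (ϑ*s) * (ϑ - ϑ*s)^b := by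
  rw [subst_integral (fun ζ => h ζ * (ϑ - ζ)^b) ϑ]


set_option maxHeartbeats 1000000 in
theorem main (α : ℝ) (hα : α ∈ Set.Ioo (0:ℝ) 1)
    (ybar : ℝ → ℝ) (hybar_cont : ContinuousOn ybar (Set.Ioc 0 1))
    (hybar_bdd : ∃ K, ∀ ζ ∈ Set.Ioc (0:ℝ) 1, |ζ ^ (1 - α) * ybar ζ| ≤ K)
    (c d : ℝ → ℝ) (hc : ContinuousOn c (Set.Icc 0 1)) (hd : ContinuousOn d (Set.Icc 0 1)) :
    (∃ y : ℝ → ℝ, ContinuousOn y (Set.Ioc 0 1) ∧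
        (∃ K, ∀ ζ ∈ Set.Ioc (0:ℝ) 1, |ζ ^ (1 - α) * y ζ| ≤ K) ∧
        ∀ ϑ ∈ Set.Ioc (0:ℝ) 1,
          y ϑ = ybar ϑ + (1 / Real.Gamma α) *
            ∫ ζ in (0:ℝ)..ϑ, (c ζ * y ζ + d ζ) * (ϑ - ζ) ^ (α - 1)) ∧
    (∀ y₁ y₂ : ℝ → ℝ,
      (ContinuousOn y₁ (Set.Ioc 0 1) ∧
        (∃ K, ∀ ζ ∈ Set.Ioc (0:ℝ) 1, |ζ ^ (1 - α) * y₁ ζ| ≤ K) ∧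
        ∀ ϑ ∈ Set.Ioc (0:ℝ) 1,
          y₁ ϑ = ybar ϑ + (1 / Real.Gamma α) *
            ∫ ζ in (0:ℝ)..ϑ, (c ζ * y₁ ζ + d ζ) * (ϑ - ζ) ^ (α - 1)) →
      (ContinuousOn y₂ (Set.Ioc 0 1) ∧
        (∃ K, ∀ ζ ∈ Set.Ioc (0:ℝ) 1, |ζ ^ (1 - α) * y₂ ζ| ≤ K) ∧
        ∀ ϑ ∈ Set.Ioc (0:ℝ) 1,
          y₂ ϑ = ybar ϑ + (1 / Real.Gamma α) *
            ∫ ζ in (0:ℝ)..ϑ, (c ζ * y₂ ζ + d ζ) * (ϑ - ζ) ^ (α - 1)) →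
      ∀ ϑ ∈ Set.Ioc (0:ℝ) 1, y₁ ϑ = y₂ ϑ) := by
  obtain ⟨hα0, hα1⟩ := hα
  have hβ : (-1:ℝ) < α - 1 := by linarith
  have hΓ : 0 < Real.Gamma α := Real.Gamma_pos_of_pos hα0
  obtain ⟨Kb, hKb⟩ := hybar_bdd
  obtain ⟨Mc', hMc'⟩ := isCompact_Icc.exists_bound_of_continuousOn hc
  obtain ⟨Md', hMd'⟩ := isCompact_Icc.exists_bound_of_continuousOn hd
  set Mc := max Mc' 0 with hMcdef
  set Md := max Md' 0 with hMddef
  have hMc0 : 0 ≤ Mc := le_max_right _ _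
  have hMd0 : 0 ≤ Md := le_max_right _ _
  have hMc : ∀ ζ ∈ Icc (0:ℝ) 1, |c ζ| ≤ Mc := fun ζ hζ => le_trans (hMc' ζ hζ) (le_max_left _ _)
  have hMd : ∀ ζ ∈ Icc (0:ℝ) 1, |d ζ| ≤ Md := fun ζ hζ => le_trans (hMd' ζ hζ) (le_max_left _ _)
  -- bound on integrand
  have hint_bd : ∀ g : ↥(Ioc (0:ℝ) 1) →ᵇ ℝ, ∀ ζ ∈ Ioc (0:ℝ) 1,
      |c ζ * ext α g ζ + d ζ| ≤ (Mc * ‖g‖ + Md) * ζ ^ (α - 1) := by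
    intro g ζ hζ
    have h1 : (1:ℝ) ≤ ζ ^ (α-1) :=
      Real.one_le_rpow_of_pos_of_le_one_of_nonpos hζ.1 hζ.2 (by linarith)
    have h2 : |c ζ * ext α g ζ + d ζ| ≤ |c ζ| * |ext α g ζ| + |d ζ| :=
      le_trans (abs_add_le _ _) (by rw [abs_mul])
    have h3 : |c ζ| * |ext α g ζ| ≤ Mc * (‖g‖ * ζ^(α-1)) :=
      mul_le_mul (hMc ζ (Ioc_subset_Icc_self hζ)) (ext_bdd α g hζ) (abs_nonneg _) hMc0
    have h4 : |d ζ| ≤ Md * ζ^(α-1) :=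
      le_trans (hMd ζ (Ioc_subset_Icc_self hζ)) (le_mul_of_one_le_right hMd0 h1)
    calc |c ζ * ext α g ζ + d ζ| ≤ Mc * (‖g‖ * ζ^(α-1)) + Md * ζ^(α-1) := by linarith
      _ = (Mc * ‖g‖ + Md) * ζ ^ (α-1) := by ring
  have hint_cont : ∀ g : ↥(Ioc (0:ℝ) 1) →ᵇ ℝ,
      ContinuousOn (fun ζ => c ζ * ext α g ζ + d ζ) (Ioc (0:ℝ) 1) :=
    fun g => ((hc.mono Ioc_subset_Icc_self).mul (ext_cont α g)).add (hd.mono Ioc_subset_Icc_self)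
  have hMg0 : ∀ g : ↥(Ioc (0:ℝ) 1) →ᵇ ℝ, 0 ≤ Mc * ‖g‖ + Md := by
    intro g; have := norm_nonneg g; positivity
  have hii : ∀ (g : ↥(Ioc (0:ℝ) 1) →ᵇ ℝ), ∀ ϑ ∈ Ioc (0:ℝ) 1,
      IntervalIntegrable (fun ζ => (c ζ * ext α g ζ + d ζ) * (ϑ - ζ)^(α-1)) volume 0 ϑ :=
    fun g ϑ hϑ => integrable_kernel hβ hβ (hint_cont g) (hint_bd g) hϑ
  set B₀ : ℝ := ∫ s in (0:ℝ)..1, s^(α-1)*(1-s)^(α-1) with hB₀def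
  have hB₀0 : 0 ≤ B₀ := by
    apply intervalIntegral.integral_nonneg (by norm_num)
    intro s hs
    exact mul_nonneg (Real.rpow_nonneg hs.1 _) (Real.rpow_nonneg (by linarith [hs.2]) _)
  -- the operator lands in bounded continuous functions
  have hTTprop : ∀ g : ↥(Ioc (0:ℝ) 1) →ᵇ ℝ, ContinuousOn (TT α ybar c d g) (Ioc (0:ℝ) 1) ∧
      ∀ ϑ ∈ Ioc (0:ℝ) 1, |TT α ybar c d g ϑ| ≤
        Kb + (1/Real.Gamma α) * ((Mc*‖g‖+Md) * B₀) := by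
    intro g
    constructor
    · have hJ := cont_subst hβ hβ (hint_cont g) (hint_bd g)
      have hpow : ContinuousOn (fun ϑ : ℝ => ϑ^(1-α)) (Ioc (0:ℝ) 1) :=
        ContinuousOn.rpow_const continuousOn_id (fun x hx => Or.inl (ne_of_gt hx.1))
      apply ContinuousOn.congr
        (f := fun ϑ => ϑ^(1-α) * ybar ϑ + (1/Real.Gamma α) * (ϑ^(1-α) * (ϑ *
          ∫ s in (0:ℝ)..1, (c (ϑ*s) * ext α g (ϑ*s) + d (ϑ*s)) * (ϑ - ϑ*s)^(α-1))))
      · exact (hpow.mul hybar_cont).add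
          (continuousOn_const.mul (hpow.mul (continuousOn_id.mul hJ)))
      · intro ϑ hϑ
        show TT α ybar c d g ϑ = _
        rw [TT, subst_integral' (fun ζ => c ζ * ext α g ζ + d ζ) (α-1) ϑ]
        ring
    · intro ϑ hϑ
      have hb2 := bound_integral hβ hβ (hMg0 g) (hint_bd g) hϑ
      have e1 : (α - 1) + (α - 1) + 1 = 2*α - 1 := by ring
      rw [e1] at hb2
      have hp1 : (0:ℝ) < ϑ ^ (1-α) := Real.rpow_pos_of_pos hϑ.1 _
      have hyb := hKb ϑ hϑ
      have key : |TT α ybar c d g ϑ| ≤ |ϑ^(1-α) * ybar ϑ| +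
          (1/Real.Gamma α) * (ϑ^(1-α) * |∫ ζ in (0:ℝ)..ϑ, (c ζ * ext α g ζ + d ζ) * (ϑ - ζ)^(α-1)|) := by
        rw [TT]
        calc |ϑ ^ (1-α) * (ybar ϑ + (1 / Real.Gamma α) * ∫ ζ in (0:ℝ)..ϑ, (c ζ * ext α g ζ + d ζ) * (ϑ - ζ) ^ (α-1))|
            = |ϑ^(1-α) * ybar ϑ + (1/Real.Gamma α) * (ϑ^(1-α) * ∫ ζ in (0:ℝ)..ϑ, (c ζ * ext α g ζ + d ζ) * (ϑ - ζ) ^ (α-1))| := by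
              congr 1; ring
          _ ≤ |ϑ^(1-α) * ybar ϑ| + |(1/Real.Gamma α) * (ϑ^(1-α) * ∫ ζ in (0:ℝ)..ϑ, (c ζ * ext α g ζ + d ζ) * (ϑ - ζ) ^ (α-1))| := abs_add_le _ _
          _ ≤ _ := by
              rw [abs_mul (1/Real.Gamma α), abs_of_nonneg (by positivity : (0:ℝ) ≤ 1/Real.Gamma α),
                abs_mul (ϑ^(1-α)), abs_of_nonneg hp1.le, abs_mul (ϑ^(1-α)), abs_of_nonneg hp1.le]
      refine key.trans ?_
      have h6 : ϑ^(1-α) * |∫ ζ in (0:ℝ)..ϑ, (c ζ * ext α g ζ + d ζ) * (ϑ - ζ)^(α-1)| ≤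
          (Mc*‖g‖+Md) * B₀ := by
        calc ϑ^(1-α) * |∫ ζ in (0:ℝ)..ϑ, (c ζ * ext α g ζ + d ζ) * (ϑ - ζ)^(α-1)|
            ≤ ϑ^(1-α) * ((Mc*‖g‖+Md) * ϑ ^ (2*α-1) * B₀) :=
              mul_le_mul_of_nonneg_left hb2 hp1.le
          _ = (ϑ^(1-α) * ϑ^(2*α-1)) * ((Mc*‖g‖+Md) * B₀) := by ring
          _ = ϑ^α * ((Mc*‖g‖+Md) * B₀) := by
              rw [← Real.rpow_add hϑ.1, show (1-α) + (2*α-1) = α by ring]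
          _ ≤ 1 * ((Mc*‖g‖+Md) * B₀) := by
              apply mul_le_mul_of_nonneg_right
                (Real.rpow_le_one hϑ.1.le hϑ.2 hα0.le)
                (mul_nonneg (hMg0 g) hB₀0)
          _ = (Mc*‖g‖+Md) * B₀ := one_mul _
      have h7 : (1/Real.Gamma α) * (ϑ^(1-α) * |∫ ζ in (0:ℝ)..ϑ, (c ζ * ext α g ζ + d ζ) * (ϑ - ζ)^(α-1)|) ≤ (1/Real.Gamma α) * ((Mc*‖g‖+Md) * B₀) :=
        mul_le_mul_of_nonneg_left h6 (by positivity)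
      linarith
  -- package as operator on the Banach space
  have hPhiex : ∀ g : ↥(Ioc (0:ℝ) 1) →ᵇ ℝ, ∃ G : ↥(Ioc (0:ℝ) 1) →ᵇ ℝ,
      ∀ z : ↥(Ioc (0:ℝ) 1), G z = TT α ybar c d g z := by
    intro g
    obtain ⟨hcontT, hbdT⟩ := hTTprop g
    exact ⟨BoundedContinuousFunction.ofNormedAddCommGroup
      ((Ioc (0:ℝ) 1).restrict (TT α ybar c d g))
      (continuousOn_iff_continuous_restrict.mp hcontT)
      (Kb + (1/Real.Gamma α) * ((Mc*‖g‖+Md) * B₀))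
      (fun z => by rw [Real.norm_eq_abs]; exact hbdT z z.2), fun z => rfl⟩
  choose Φ hΦ using hPhiex
  have hdiff : ∀ (g₁ g₂ : ↥(Ioc (0:ℝ) 1) →ᵇ ℝ) (ϑ : ℝ) (hϑ : ϑ ∈ Ioc (0:ℝ) 1),
      (Φ g₁) ⟨ϑ, hϑ⟩ - (Φ g₂) ⟨ϑ, hϑ⟩ =
        ϑ^(1-α) * ((1/Real.Gamma α) *
          ∫ ζ in (0:ℝ)..ϑ, (c ζ * (ext α g₁ ζ - ext α g₂ ζ)) * (ϑ - ζ)^(α-1)) := by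
    intro g₁ g₂ ϑ hϑ
    rw [hΦ g₁ ⟨ϑ,hϑ⟩, hΦ g₂ ⟨ϑ,hϑ⟩]
    have hI : (∫ ζ in (0:ℝ)..ϑ, (c ζ * ext α g₁ ζ + d ζ) * (ϑ - ζ)^(α-1))
        - (∫ ζ in (0:ℝ)..ϑ, (c ζ * ext α g₂ ζ + d ζ) * (ϑ - ζ)^(α-1))
        = ∫ ζ in (0:ℝ)..ϑ, (c ζ * (ext α g₁ ζ - ext α g₂ ζ)) * (ϑ - ζ)^(α-1) := by
      rw [← intervalIntegral.integral_sub (hii g₁ ϑ hϑ) (hii g₂ ϑ hϑ)]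
      apply intervalIntegral.integral_congr
      intro ζ _
      ring
    simp only [TT]
    rw [← hI]
    ring
  set q : ℕ → ℝ := fun k =>
    (Mc / Real.Gamma α) * ∫ s in (0:ℝ)..1, s ^ (((k:ℝ)+1)*α - 1) * (1-s)^(α-1) with hqdef
  set Cn : ℕ → ℝ := fun n => ∏ k ∈ Finset.range n, q k with hCndef
  have hq0 : ∀ k, 0 ≤ q k := by
    intro k
    apply mul_nonneg (div_nonneg hMc0 hΓ.le)
    apply intervalIntegral.integral_nonneg (by norm_num)
    intro s hs
    exact mul_nonneg (Real.rpow_nonneg hs.1 _) (Real.rpow_nonneg (by linarith [hs.2]) _)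
  have hCn0 : ∀ n, 0 ≤ Cn n := fun n => Finset.prod_nonneg (fun k _ => hq0 k)
  have hiter : ∀ (n : ℕ) (g₁ g₂ : ↥(Ioc (0:ℝ) 1) →ᵇ ℝ) (z : ↥(Ioc (0:ℝ) 1)),
      |(Φ^[n] g₁) z - (Φ^[n] g₂) z| ≤ Cn n * (z:ℝ)^((n:ℝ)*α) * dist g₁ g₂ := by
    intro n
    induction n with
    | zero =>
      intro g₁ g₂ z
      simp only [Function.iterate_zero, id_eq, Nat.cast_zero, zero_mul, Real.rpow_zero, hCndef,
        Finset.range_zero, Finset.prod_empty, one_mul]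
      rw [← Real.dist_eq]
      exact dist_coe_le_dist z
    | succ n ih =>
      intro g₁ g₂ z
      obtain ⟨ϑ, hϑ⟩ := z
      rw [Function.iterate_succ_apply', Function.iterate_succ_apply']
      rw [hdiff (Φ^[n] g₁) (Φ^[n] g₂) ϑ hϑ]
      push_cast
      have hM : ∀ ζ ∈ Ioc (0:ℝ) 1,
          |c ζ * (ext α (Φ^[n] g₁) ζ - ext α (Φ^[n] g₂) ζ)| ≤
            (Mc * (Cn n * dist g₁ g₂)) * ζ ^ (((n:ℝ)+1)*α - 1) := by
        intro ζ hζ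
        rw [abs_mul, ext_sub α _ _ hζ, abs_mul,
          abs_of_nonneg (Real.rpow_nonneg hζ.1.le _)]
        calc |c ζ| * (ζ^(α-1) * |(Φ^[n] g₁) ⟨ζ,hζ⟩ - (Φ^[n] g₂) ⟨ζ,hζ⟩|)
            ≤ Mc * (ζ^(α-1) * (Cn n * ζ^((n:ℝ)*α) * dist g₁ g₂)) := by
              apply mul_le_mul (hMc ζ (Ioc_subset_Icc_self hζ))
                (mul_le_mul_of_nonneg_left (ih g₁ g₂ ⟨ζ,hζ⟩) (Real.rpow_nonneg hζ.1.le _))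
                (mul_nonneg (Real.rpow_nonneg hζ.1.le _) (abs_nonneg _)) hMc0
          _ = (Mc * (Cn n * dist g₁ g₂)) * (ζ^(α-1) * ζ^((n:ℝ)*α)) := by ring
          _ = (Mc * (Cn n * dist g₁ g₂)) * ζ ^ (((n:ℝ)+1)*α - 1) := by
              rw [← Real.rpow_add hζ.1, show (α-1) + (n:ℝ)*α = ((n:ℝ)+1)*α - 1 by ring]
      have ha' : (-1:ℝ) < ((n:ℝ)+1)*α - 1 := by nlinarith [Nat.cast_nonneg (α := ℝ) n]
      have hM0' : 0 ≤ Mc * (Cn n * dist g₁ g₂) := by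
        exact mul_nonneg hMc0 (mul_nonneg (hCn0 n) dist_nonneg)
      have hb2 := bound_integral (a := ((n:ℝ)+1)*α - 1) (b := α - 1)
        (h := fun ζ => c ζ * (ext α (Φ^[n] g₁) ζ - ext α (Φ^[n] g₂) ζ))
        (M := Mc * (Cn n * dist g₁ g₂)) ha' hβ hM0' hM hϑ
      calc |ϑ^(1-α) * ((1/Real.Gamma α) * ∫ ζ in (0:ℝ)..ϑ, (c ζ * (ext α (Φ^[n] g₁) ζ - ext α (Φ^[n] g₂) ζ)) * (ϑ - ζ)^(α-1))|
          = ϑ^(1-α) * ((1/Real.Gamma α) * |∫ ζ in (0:ℝ)..ϑ, (c ζ * (ext α (Φ^[n] g₁) ζ - ext α (Φ^[n] g₂) ζ)) * (ϑ - ζ)^(α-1)|) := by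
            rw [abs_mul, abs_mul, abs_of_nonneg (Real.rpow_nonneg hϑ.1.le _),
              abs_of_nonneg (by positivity : (0:ℝ) ≤ 1/Real.Gamma α)]
        _ ≤ ϑ^(1-α) * ((1/Real.Gamma α) * ((Mc * (Cn n * dist g₁ g₂)) *
              ϑ ^ ((((n:ℝ)+1)*α - 1) + (α-1) + 1) *
              ∫ s in (0:ℝ)..1, s ^ (((n:ℝ)+1)*α - 1) * (1-s)^(α-1))) := by
            apply mul_le_mul_of_nonneg_left _ (Real.rpow_nonneg hϑ.1.le _)
            exact mul_le_mul_of_nonneg_left hb2 (by positivity)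
        _ = (Cn n * q n) * (ϑ^(1-α) * ϑ^((((n:ℝ)+1)*α - 1) + (α-1) + 1)) * dist g₁ g₂ := by
            simp only [hqdef]
            ring
        _ = Cn (n+1) * ϑ^(((n:ℝ)+1)*α) * dist g₁ g₂ := by
            rw [← Real.rpow_add hϑ.1,
              show (1-α) + ((((n:ℝ)+1)*α - 1) + (α-1) + 1) = ((n:ℝ)+1)*α by ring]
            simp only [hCndef]
            rw [Finset.prod_range_succ]
  -- find a contracting iterate
  have hqt : Tendsto q atTop (𝓝 0) := by
    have h2 := (Bint_tendsto hα0 hβ).const_mul (Mc / Real.Gamma α)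
    rw [mul_zero] at h2
    rw [hqdef]
    exact h2
  obtain ⟨N, hN⟩ : ∃ N, ∀ k, N ≤ k → q k ≤ 1/2 :=
    eventually_atTop.mp (hqt.eventually_le_const (by norm_num : (0:ℝ) < 1/2))
  have hCle : ∀ m, Cn (N + m) ≤ Cn N * (1/2:ℝ)^m := by
    intro m
    induction m with
    | zero => simp
    | succ m ihm =>
      have hstep : Cn (N + (m+1)) = Cn (N + m) * q (N + m) := by
        simp only [hCndef]
        rw [show N + (m+1) = (N+m) + 1 by ring, Finset.prod_range_succ]
      rw [hstep, pow_succ]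
      have hmm := mul_le_mul ihm (hN (N+m) (by omega)) (hq0 (N+m))
        (mul_nonneg (hCn0 N) (by positivity))
      exact hmm.trans (le_of_eq (mul_assoc _ _ _))
  obtain ⟨m₀, hm₀⟩ : ∃ m : ℕ, Cn N * (1/2:ℝ)^m < 1 := by
    have h2 : Tendsto (fun m : ℕ => Cn N * (1/2:ℝ)^m) atTop (𝓝 (Cn N * 0)) :=
      (tendsto_pow_atTop_nhds_zero_of_lt_one (by norm_num) (by norm_num)).const_mul (Cn N)
    rw [mul_zero] at h2
    exact (h2.eventually_lt_const (by norm_num : (0:ℝ) < 1)).exists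
  set n₀ := N + m₀ with hn₀
  have hKlt : Cn n₀ < 1 := lt_of_le_of_lt (hCle m₀) hm₀
  have hlip : ∀ g₁ g₂ : ↥(Ioc (0:ℝ) 1) →ᵇ ℝ,
      dist (Φ^[n₀] g₁) (Φ^[n₀] g₂) ≤ Cn n₀ * dist g₁ g₂ := by
    intro g₁ g₂
    rw [BoundedContinuousFunction.dist_le (mul_nonneg (hCn0 _) dist_nonneg)]
    intro z
    rw [Real.dist_eq]
    refine le_trans (hiter n₀ g₁ g₂ z) ?_
    have hz1 : (z:ℝ)^((n₀:ℝ)*α) ≤ 1 :=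
      Real.rpow_le_one z.2.1.le z.2.2 (by positivity)
    calc Cn n₀ * (z:ℝ)^((n₀:ℝ)*α) * dist g₁ g₂ ≤ Cn n₀ * 1 * dist g₁ g₂ :=
          mul_le_mul_of_nonneg_right (mul_le_mul_of_nonneg_left hz1 (hCn0 _)) dist_nonneg
      _ = Cn n₀ * dist g₁ g₂ := by ring
  have hcontr : ContractingWith ⟨Cn n₀, hCn0 n₀⟩ (Φ^[n₀]) := by
    constructor
    · exact_mod_cast hKlt
    · exact LipschitzWith.of_dist_le_mul hlip
  have hpowinv : ∀ ζ : ℝ, 0 < ζ → ζ^(α-1) * ζ^(1-α) = 1 := by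
    intro ζ hz
    rw [← Real.rpow_add hz]
    norm_num
  set gs := ContractingWith.fixedPoint (Φ^[n₀]) hcontr with hgs
  have hfix : Φ gs = gs := hcontr.isFixedPt_fixedPoint_iterate
  constructor
  · -- existence
    refine ⟨ext α gs, ext_cont α gs, ⟨‖gs‖, ?_⟩, ?_⟩
    · intro ζ hζ
      rw [ext_eq α gs hζ,
        show ζ ^ (1-α) * (ζ^(α-1) * gs ⟨ζ,hζ⟩) = (ζ^(α-1) * ζ^(1-α)) * gs ⟨ζ,hζ⟩ by ring,
        hpowinv ζ hζ.1, one_mul]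
      exact (Real.norm_eq_abs _ ▸ gs.norm_coe_le_norm ⟨ζ,hζ⟩)
    · intro ϑ hϑ
      have h1 : (gs : _ → ℝ) ⟨ϑ,hϑ⟩ = TT α ybar c d gs ϑ := by
        conv_lhs => rw [← hfix]
        exact hΦ gs ⟨ϑ,hϑ⟩
      have h2 : ext α gs ϑ = ϑ^(α-1) * TT α ybar c d gs ϑ := by
        rw [ext_eq α gs hϑ, h1]
      rw [h2]
      simp only [TT]
      rw [← mul_assoc, hpowinv ϑ hϑ.1, one_mul]
  · -- uniqueness
    rintro y₁ y₂ ⟨hc1, ⟨K₁, hK₁⟩, he1⟩ ⟨hc2, ⟨K₂, hK₂⟩, he2⟩ ϑ hϑ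
    have mk : ∀ (y : ℝ → ℝ), ContinuousOn y (Ioc 0 1) →
        ∀ K : ℝ, (∀ ζ ∈ Ioc (0:ℝ) 1, |ζ^(1-α) * y ζ| ≤ K) →
        (∀ ϑ' ∈ Ioc (0:ℝ) 1, y ϑ' = ybar ϑ' + (1/Real.Gamma α) *
          ∫ ζ in (0:ℝ)..ϑ', (c ζ * y ζ + d ζ) * (ϑ'-ζ)^(α-1)) →
        ∃ g : ↥(Ioc (0:ℝ) 1) →ᵇ ℝ,
          (∀ z : ↥(Ioc (0:ℝ) 1), g z = (z:ℝ)^(1-α) * y z) ∧ Φ g = g := by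
      intro y hyc K hyK hye
      have hgc : Continuous ((Ioc (0:ℝ) 1).restrict (fun ζ => ζ^(1-α) * y ζ)) := by
        apply continuousOn_iff_continuous_restrict.mp
        exact (ContinuousOn.rpow_const continuousOn_id
          (fun x hx => Or.inl (ne_of_gt hx.1))).mul hyc
      set g : ↥(Ioc (0:ℝ) 1) →ᵇ ℝ := BoundedContinuousFunction.ofNormedAddCommGroup
        ((Ioc (0:ℝ) 1).restrict (fun ζ => ζ^(1-α) * y ζ)) hgc K
        (fun z => by rw [Real.norm_eq_abs]; exact hyK z z.2) with hgdef
      have hgapp : ∀ z : ↥(Ioc (0:ℝ) 1), g z = (z:ℝ)^(1-α) * y z := fun z => rfl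
      have hexty : ∀ ζ (hζ : ζ ∈ Ioc (0:ℝ) 1), ext α g ζ = y ζ := by
        intro ζ hζ
        rw [ext_eq α g hζ, hgapp ⟨ζ,hζ⟩, ← mul_assoc, hpowinv ζ hζ.1, one_mul]
      refine ⟨g, hgapp, ?_⟩
      apply BoundedContinuousFunction.ext
      intro z
      rw [hΦ g z]
      have hintcongr : (∫ ζ in (0:ℝ)..(z:ℝ), (c ζ * ext α g ζ + d ζ) * ((z:ℝ) - ζ)^(α-1))
          = ∫ ζ in (0:ℝ)..(z:ℝ), (c ζ * y ζ + d ζ) * ((z:ℝ) - ζ)^(α-1) := by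
        apply intervalIntegral.integral_congr_ae
        apply ae_of_all
        intro ζ hζI
        rw [uIoc_of_le z.2.1.le] at hζI
        have hmem : ζ ∈ Ioc (0:ℝ) 1 := ⟨hζI.1, le_trans hζI.2 z.2.2⟩
        rw [hexty ζ hmem]
      simp only [TT]
      rw [hintcongr, ← hye (z:ℝ) z.2, hgapp z]
    obtain ⟨g₁, hg₁app, hg₁fix⟩ := mk y₁ hc1 K₁ hK₁ he1
    obtain ⟨g₂, hg₂app, hg₂fix⟩ := mk y₂ hc2 K₂ hK₂ he2
    have hgeq : g₁ = g₂ := by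
      have h₁ : Function.IsFixedPt (Φ^[n₀]) g₁ := Function.IsFixedPt.iterate hg₁fix n₀
      have h₂ : Function.IsFixedPt (Φ^[n₀]) g₂ := Function.IsFixedPt.iterate hg₂fix n₀
      exact hcontr.fixedPoint_unique' h₁ h₂
    have e1 : ϑ^(1-α) * y₁ ϑ = ϑ^(1-α) * y₂ ϑ := by
      rw [← hg₁app ⟨ϑ,hϑ⟩, ← hg₂app ⟨ϑ,hϑ⟩, hgeq]
    exact mul_left_cancel₀ (ne_of_gt (Real.rpow_pos_of_pos hϑ.1 _)) e1


end V9

theorem stmt_9 (α : ℝ) (hα : α ∈ Set.Ioo (0:ℝ) 1)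
    (ybar : ℝ → ℝ) (hybar_cont : ContinuousOn ybar (Set.Ioc 0 1))
    (hybar_bdd : ∃ K, ∀ ζ ∈ Set.Ioc (0:ℝ) 1, |ζ ^ (1 - α) * ybar ζ| ≤ K)
    (c d : ℝ → ℝ) (hc : ContinuousOn c (Set.Icc 0 1)) (hd : ContinuousOn d (Set.Icc 0 1)) :
    (∃ y : ℝ → ℝ, ContinuousOn y (Set.Ioc 0 1) ∧
        (∃ K, ∀ ζ ∈ Set.Ioc (0:ℝ) 1, |ζ ^ (1 - α) * y ζ| ≤ K) ∧
        ∀ ϑ ∈ Set.Ioc (0:ℝ) 1,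
          y ϑ = ybar ϑ + (1 / Real.Gamma α) *
            ∫ ζ in (0:ℝ)..ϑ, (c ζ * y ζ + d ζ) * (ϑ - ζ) ^ (α - 1)) ∧
    (∀ y₁ y₂ : ℝ → ℝ,
      (ContinuousOn y₁ (Set.Ioc 0 1) ∧
        (∃ K, ∀ ζ ∈ Set.Ioc (0:ℝ) 1, |ζ ^ (1 - α) * y₁ ζ| ≤ K) ∧
        ∀ ϑ ∈ Set.Ioc (0:ℝ) 1,
          y₁ ϑ = ybar ϑ + (1 / Real.Gamma α) *
            ∫ ζ in (0:ℝ)..ϑ, (c ζ * y₁ ζ + d ζ) * (ϑ - ζ) ^ (α - 1)) →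
      (ContinuousOn y₂ (Set.Ioc 0 1) ∧
        (∃ K, ∀ ζ ∈ Set.Ioc (0:ℝ) 1, |ζ ^ (1 - α) * y₂ ζ| ≤ K) ∧
        ∀ ϑ ∈ Set.Ioc (0:ℝ) 1,
          y₂ ϑ = ybar ϑ + (1 / Real.Gamma α) *
            ∫ ζ in (0:ℝ)..ϑ, (c ζ * y₂ ζ + d ζ) * (ϑ - ζ) ^ (α - 1)) →
      ∀ ϑ ∈ Set.Ioc (0:ℝ) 1, y₁ ϑ = y₂ ϑ) :=
  V9.main α hα ybar hybar_cont hybar_bdd c d hc hd
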